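/- (Lemma 1, secant-error bounds for dynamic TR1 updates.) Let F : ℝⁿ → ℝᵐ be continuously differentiable with Jacobian DF Lipschitz continuous with constant c₃, and let c₁ ∈ (0,1). Let (wᵏ)ₖ in ℝⁿ, (σᵏ)ₖ in ℝᵐ, and (Aᵏ)ₖ in ℝ^{m×n} be sequences with sᵏ = wᵏ⁺¹ − wᵏ, yᵏ = F(wᵏ⁺¹) − F(wᵏ), γᵏ = DF(wᵏ⁺¹)ᵀσᵏ, ρᵏ = yᵏ − Aᵏsᵏ, τᵏ = γᵏ − (Aᵏ)ᵀσᵏ. Suppose at every iteration k: σᵏ ≠ 0, both skipping conditions hold, namely |(τᵏ)ᵀsᵏ| ≥ c₁‖σᵏ‖‖ρᵏ‖ and |(σᵏ)ᵀρᵏ| ≥ c₁‖sᵏ‖‖τᵏ‖, and Aᵏ⁺¹ = Aᵏ + αᵏ ρᵏ (τᵏ)ᵀ where αᵏ equals either the forward scaling 1/((τᵏ)ᵀsᵏ) or the adjoint scaling 1/((σᵏ)ᵀρᵏ) (chosen arbitrarily per iteration, with the corresponding denominator nonzero). Define η^{l,k} = max{‖wᵖ − w^q‖ : k ≤ q ≤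 p ≤ l}. Then for every k and every l ≥ k + 1, both ‖yᵏ − Aˡ sᵏ‖ ≤ (c₃/c₁)(2/c₁² + 1)^{l−k} η^{l,k} ‖sᵏ‖ and ‖γᵏ − (Aˡ)ᵀ σᵏ‖ ≤ (c₃/c₁)(2/c₁² + 1)^{l−k} η^{l,k} ‖σᵏ‖. -/

import Mathlib

open scoped RealInnerProductSpace Matrix Matrix.Norms.L2Operator

/-- Multiplication of a matrix with a vector, as a map between Euclidean spaces. -/
noncomputable def matVec {m n : ℕ} (A : Matrix (Fin m) (Fin n) ℝ)
    (v : EuclideanSpace ℝ (Fin n)) : EuclideanSpace ℝ (Fin m) :=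
  Matrix.toEuclideanLin A v

/-- Outer product `u vᵀ` of two Euclidean vectors, as a matrix. -/
def outer {m n : ℕ} (u : EuclideanSpace ℝ (Fin m)) (v : EuclideanSpace ℝ (Fin n)) :
    Matrix (Fin m) (Fin n) ℝ :=
  Matrix.of fun i j => u i * v j

lemma matVec_norm_le {m n : ℕ} (A : Matrix (Fin m) (Fin n) ℝ) (x : EuclideanSpace ℝ (Fin n)) :
    ‖matVec A x‖ ≤ ‖A‖ * ‖x‖ := A.l2_opNorm_mulVec x

lemma matVec_add {m n : ℕ} (A B : Matrix (Fin m) (Fin n) ℝ) (x : EuclideanSpace ℝ (Fin n)) :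
    matVec (A + B) x = matVec A x + matVec B x := by
  simp [matVec, map_add]

lemma matVec_smul {m n : ℕ} (c : ℝ) (A : Matrix (Fin m) (Fin n) ℝ) (x : EuclideanSpace ℝ (Fin n)) :
    matVec (c • A) x = c • matVec A x := by
  simp [matVec, map_smul]

lemma matVec_outer {m n : ℕ} (u : EuclideanSpace ℝ (Fin m)) (v : EuclideanSpace ℝ (Fin n))
    (x : EuclideanSpace ℝ (Fin n)) : matVec (outer u v) x = ⟪v, x⟫ • u := by
  ext i
  simp only [matVec, Matrix.toEuclideanLin_apply, outer, Matrix.mulVec, dotProduct,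
    PiLp.inner_apply, RCLike.inner_apply, starRingEnd_apply, star_trivial,
    PiLp.smul_apply, smul_eq_mul, Matrix.of_apply]
  rw [Finset.sum_mul]
  congr 1; ext j
  ring

lemma outer_transpose {m n : ℕ} (u : EuclideanSpace ℝ (Fin m)) (v : EuclideanSpace ℝ (Fin n)) :
    (outer u v)ᵀ = outer v u := by
  ext i j; simp [outer, Matrix.transpose, mul_comm]

lemma inner_matVec_transpose {m n : ℕ} (A : Matrix (Fin m) (Fin n) ℝ)
    (u : EuclideanSpace ℝ (Fin m)) (x : EuclideanSpace ℝ (Fin n)) :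
    ⟪matVec Aᵀ u, x⟫ = ⟪u, matVec A x⟫ := by
  simp only [matVec, Matrix.toEuclideanLin_apply, PiLp.inner_apply, RCLike.inner_apply,
    starRingEnd_apply, star_trivial, Matrix.mulVec,
    dotProduct, Matrix.transpose_apply]
  simp only [Finset.sum_mul, Finset.mul_sum]
  rw [Finset.sum_comm]
  congr 1; ext j; congr 1; ext i
  ring

lemma mvt_aux {n m : ℕ} (c₃ : ℝ) (hc₃ : 0 ≤ c₃)
    (F : EuclideanSpace ℝ (Fin n) → EuclideanSpace ℝ (Fin m))
    (J : EuclideanSpace ℝ (Fin n) → Matrix (Fin m) (Fin n) ℝ)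
    (hJ : ∀ w, HasFDerivAt F (LinearMap.toContinuousLinearMap (Matrix.toEuclideanLin (J w))) w)
    (hLip : ∀ w₁ w₂, ‖J w₁ - J w₂‖ ≤ c₃ * ‖w₁ - w₂‖)
    (a b z : EuclideanSpace ℝ (Fin n)) :
    ‖F b - F a - matVec (J z) (b - a)‖ ≤ c₃ * max ‖z - a‖ ‖z - b‖ * ‖b - a‖ := by
  set L : Matrix (Fin m) (Fin n) ℝ → (EuclideanSpace ℝ (Fin n) →L[ℝ] EuclideanSpace ℝ (Fin m)) :=
    fun B => LinearMap.toContinuousLinearMap (Matrix.toEuclideanLin B) with hL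
  have hnorm : ∀ B, ‖L B‖ = ‖B‖ := fun B => (Matrix.l2_opNorm_def B).symm
  have hG : ∀ x ∈ segment ℝ a b,
      HasFDerivWithinAt (fun u => F u - matVec (J z) u) (L (J x) - L (J z)) (segment ℝ a b) x := by
    intro x _
    exact (((hJ x).sub ((L (J z)).hasFDerivAt)).hasFDerivWithinAt)
  have hbound : ∀ x ∈ segment ℝ a b, ‖L (J x) - L (J z)‖ ≤ c₃ * max ‖z - a‖ ‖z - b‖ := by
    intro x hx
    have h1 : L (J x) - L (J z) = L (J x - J z) := by simp [hL, map_sub]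
    rw [h1, hnorm]
    refine le_trans (hLip x z) ?_
    gcongr
    obtain ⟨α, β, hα, hβ, hαβ, hx⟩ := hx
    have hzx : z - x = α • (z - a) + β • (z - b) := by
      rw [← hx, smul_sub, smul_sub, ← sub_sub]
      rw [show α • z - α • a + (β • z - β • b) = (α+β) • z - α • a - β • b by rw [add_smul]; abel,
        hαβ, one_smul]
    calc ‖x - z‖ = ‖z - x‖ := norm_sub_rev _ _
      _ ≤ α * ‖z - a‖ + β * ‖z - b‖ := by
          rw [hzx]
          refine le_trans (norm_add_le _ _) ?_
          simp [norm_smul, abs_of_nonneg hα, abs_of_nonneg hβ]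
      _ ≤ α * max ‖z - a‖ ‖z - b‖ + β * max ‖z - a‖ ‖z - b‖ := by
          gcongr; exact le_max_left _ _; exact le_max_right _ _
      _ = max ‖z - a‖ ‖z - b‖ := by rw [← add_mul, hαβ, one_mul]
  have key := (convex_segment a b).norm_image_sub_le_of_norm_hasFDerivWithin_le hG hbound
    (left_mem_segment ℝ a b) (right_mem_segment ℝ a b)
  have heq : matVec (J z) b - matVec (J z) a = matVec (J z) (b - a) := by
    simp [matVec, map_sub]
  have heq2 : F b - F a - matVec (J z) (b - a)
      = (F b - matVec (J z) b) - (F a - matVec (J z) a) := by rw [← heq]; abel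
  rw [heq2]
  exact key

lemma eta_bdd {n : ℕ} (w : ℕ → EuclideanSpace ℝ (Fin n)) (l k : ℕ) :
    BddAbove {x : ℝ | ∃ p q, k ≤ q ∧ q ≤ p ∧ p ≤ l ∧ x = ‖w p - w q‖} := by
  apply BddAbove.mono (t := ↑((Finset.range (l+1) ×ˢ Finset.range (l+1)).image
    fun pq : ℕ × ℕ => ‖w pq.1 - w pq.2‖)) ?_ (Finset.bddAbove _)
  rintro x ⟨p, q, h1, h2, h3, rfl⟩
  simp only [Finset.coe_image, Set.mem_image, Finset.mem_coe, Finset.mem_product,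
    Finset.mem_range]
  exact ⟨(p, q), ⟨by omega, by omega⟩, rfl⟩

lemma eta_mem {n : ℕ} (w : ℕ → EuclideanSpace ℝ (Fin n)) {l k p q : ℕ}
    (h1 : k ≤ q) (h2 : q ≤ p) (h3 : p ≤ l) :
    ‖w p - w q‖ ≤ sSup {x : ℝ | ∃ p q, k ≤ q ∧ q ≤ p ∧ p ≤ l ∧ x = ‖w p - w q‖} :=
  le_csSup (eta_bdd w l k) ⟨p, q, h1, h2, h3, rfl⟩

lemma eta_nonneg {n : ℕ} (w : ℕ → EuclideanSpace ℝ (Fin n)) {l k : ℕ} (h : k ≤ l) :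
    0 ≤ sSup {x : ℝ | ∃ p q, k ≤ q ∧ q ≤ p ∧ p ≤ l ∧ x = ‖w p - w q‖} := by
  have := eta_mem w (le_refl k) (le_refl k) h
  simpa using this

lemma eta_mono {n : ℕ} (w : ℕ → EuclideanSpace ℝ (Fin n)) {l k : ℕ} (h : k ≤ l) :
    sSup {x : ℝ | ∃ p q, k ≤ q ∧ q ≤ p ∧ p ≤ l ∧ x = ‖w p - w q‖}
      ≤ sSup {x : ℝ | ∃ p q, k ≤ q ∧ q ≤ p ∧ p ≤ l + 1 ∧ x = ‖w p - w q‖} := by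
  refine csSup_le_csSup (eta_bdd w (l+1) k) ⟨‖w k - w k‖, ?_⟩ ?_
  · exact ⟨k, k, le_refl k, le_refl k, h, rfl⟩
  · rintro x ⟨p, q, h1, h2, h3, rfl⟩
    exact ⟨p, q, h1, h2, by omega, rfl⟩

lemma arith_step (c₁ c₃ e e' ηo ηn ns Md : ℝ) (hc0 : 0 < c₁) (hc1 : c₁ ≤ 1) (hc₃ : 0 ≤ c₃)
    (hns : 0 ≤ ns) (hηo : 0 ≤ ηo) (hηm : ηo ≤ ηn) (hMd : 1 ≤ Md)
    (hIH : e ≤ c₃ / c₁ * Md * ηo * ns)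
    (hstep : e' ≤ e + 1 / c₁ ^ 2 * (c₃ * ηn * ns + e)) :
    e' ≤ c₃ / c₁ * ((2 / c₁ ^ 2 + 1) * Md) * ηn * ns := by
  have hc2 : (0:ℝ) < c₁ ^ 2 := by positivity
  have hηn : 0 ≤ ηn := le_trans hηo hηm
  rw [show c₃ / c₁ * Md * ηo * ns = c₃ * Md * ηo * ns / c₁ by ring, le_div_iff₀ hc0] at hIH
  rw [show c₃ / c₁ * ((2 / c₁ ^ 2 + 1) * Md) * ηn * ns
      = (c₃ * Md * ηn * ns * 2 + c₃ * Md * ηn * ns * c₁ ^ 2) / c₁ ^ 3 by field_simp,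
    le_div_iff₀ (by positivity : (0:ℝ) < c₁ ^ 3)]
  have hstep2 : e' * c₁ ^ 2 ≤ e * c₁ ^ 2 + (c₃ * ηn * ns + e) := by
    have := mul_le_mul_of_nonneg_right hstep hc2.le
    rw [add_mul, mul_assoc, one_div, mul_comm (c₃ * ηn * ns + e),
      ← mul_assoc, inv_mul_cancel₀ (ne_of_gt hc2), one_mul] at this
    linarith
  have hX : e * c₁ ≤ c₃ * Md * ηo * ns := hIH
  have hmono : c₃ * Md * ηo * ns ≤ c₃ * Md * ηn * ns := by
    have : 0 ≤ c₃ * Md * ns := mul_nonneg (mul_nonneg hc₃ (zero_le_one.trans hMd)) hns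
    nlinarith
  nlinarith [mul_le_mul_of_nonneg_right hstep2 hc0.le,
    mul_le_mul_of_nonneg_right (hX.trans hmono) (mul_self_nonneg c₁),
    mul_nonneg (mul_nonneg hc₃ hηn) hns,
    mul_nonneg (mul_nonneg (mul_nonneg hc₃ (zero_le_one.trans hMd)) hηn) hns]

lemma arith_base (c₁ c₃ e ηv ns : ℝ) (hc0 : 0 < c₁) (hc1 : c₁ ≤ 1) (hc₃ : 0 ≤ c₃)
    (hns : 0 ≤ ns) (hη : 0 ≤ ηv) (he : e * c₁ ^ 2 ≤ c₃ * ηv * ns) :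
    e ≤ c₃ / c₁ * (2 / c₁ ^ 2 + 1) * ηv * ns := by
  rw [show c₃ / c₁ * (2 / c₁ ^ 2 + 1) * ηv * ns
      = (c₃ * ηv * ns * 2 + c₃ * ηv * ns * c₁ ^ 2) / c₁ ^ 3 by field_simp,
    le_div_iff₀ (by positivity : (0:ℝ) < c₁ ^ 3)]
  nlinarith [mul_le_mul_of_nonneg_right he hc0.le, mul_nonneg (mul_nonneg hc₃ hη) hns]

/-- Lemma 1: secant-error bounds for the dynamic (forward/adjoint) TR1
quasi-Newton Jacobian updates under the skipping conditions. -/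
theorem tr1_dynamic_secant_error_bounds {n m : ℕ} (c₁ c₃ : ℝ) (hc₁0 : 0 < c₁) (hc₁1 : c₁ < 1)
    (F : EuclideanSpace ℝ (Fin n) → EuclideanSpace ℝ (Fin m))
    (J : EuclideanSpace ℝ (Fin n) → Matrix (Fin m) (Fin n) ℝ)
    (hJ : ∀ w, HasFDerivAt F (LinearMap.toContinuousLinearMap (Matrix.toEuclideanLin (J w))) w)
    (hLip : ∀ w₁ w₂, ‖J w₁ - J w₂‖ ≤ c₃ * ‖w₁ - w₂‖)
    (w : ℕ → EuclideanSpace ℝ (Fin n)) (σ : ℕ → EuclideanSpace ℝ (Fin m))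
    (A : ℕ → Matrix (Fin m) (Fin n) ℝ)
    (s : ℕ → EuclideanSpace ℝ (Fin n)) (hs : ∀ k, s k = w (k + 1) - w k)
    (y : ℕ → EuclideanSpace ℝ (Fin m)) (hy : ∀ k, y k = F (w (k + 1)) - F (w k))
    (γ : ℕ → EuclideanSpace ℝ (Fin n)) (hγ : ∀ k, γ k = matVec (J (w (k + 1)))ᵀ (σ k))
    (ρ : ℕ → EuclideanSpace ℝ (Fin m)) (hρ : ∀ k, ρ k = y k - matVec (A k) (s k))
    (τ : ℕ → EuclideanSpace ℝ (Fin n)) (hτ : ∀ k, τ k = γ k - matVec (A k)ᵀ (σ k))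
    (hσ : ∀ k, σ k ≠ 0)
    (hskip1 : ∀ k, c₁ * ‖σ k‖ * ‖ρ k‖ ≤ |⟪τ k, s k⟫|)
    (hskip2 : ∀ k, c₁ * ‖s k‖ * ‖τ k‖ ≤ |⟪σ k, ρ k⟫|)
    (hupd : ∀ k,
      (⟪τ k, s k⟫ ≠ 0 ∧ A (k + 1) = A k + (1 / ⟪τ k, s k⟫) • outer (ρ k) (τ k)) ∨
      (⟪σ k, ρ k⟫ ≠ 0 ∧ A (k + 1) = A k + (1 / ⟪σ k, ρ k⟫) • outer (ρ k) (τ k)))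
    (η : ℕ → ℕ → ℝ)
    (hη : ∀ l k, η l k = sSup {x : ℝ | ∃ p q, k ≤ q ∧ q ≤ p ∧ p ≤ l ∧ x = ‖w p - w q‖}) :
    ∀ k l, k + 1 ≤ l →
      ‖y k - matVec (A l) (s k)‖ ≤
        (c₃ / c₁) * (2 / c₁ ^ 2 + 1) ^ (l - k) * η l k * ‖s k‖ ∧
      ‖γ k - matVec (A l)ᵀ (σ k)‖ ≤
        (c₃ / c₁) * (2 / c₁ ^ 2 + 1) ^ (l - k) * η l k * ‖σ k‖ := by
  have hmem : ∀ {l k p q : ℕ}, k ≤ q → q ≤ p → p ≤ l → ‖w p - w q‖ ≤ η l k := by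
    intro l k p q h1 h2 h3; rw [hη]; exact eta_mem w h1 h2 h3
  have hnn : ∀ {l k : ℕ}, k ≤ l → 0 ≤ η l k := by
    intro l k h; rw [hη]; exact eta_nonneg w h
  have hmono : ∀ {l k : ℕ}, k ≤ l → η l k ≤ η (l+1) k := by
    intro l k h; rw [hη, hη]; exact eta_mono w h
  have hfacts : ∀ j, s j ≠ 0 ∧ τ j ≠ 0 ∧ ρ j ≠ 0 ∧ ⟪τ j, s j⟫ ≠ 0 ∧ ⟪σ j, ρ j⟫ ≠ 0 := by
    intro j
    have cs1 := abs_real_inner_le_norm (τ j) (s j)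
    have cs2 := abs_real_inner_le_norm (σ j) (ρ j)
    have h1 := hskip1 j; have h2 := hskip2 j
    have hσn : 0 < ‖σ j‖ := norm_pos_iff.mpr (hσ j)
    have hts : ⟪τ j, s j⟫ ≠ 0 ∧ ⟪σ j, ρ j⟫ ≠ 0 := by
      rcases hupd j with ⟨h0, _⟩ | ⟨h0, _⟩
      · refine ⟨h0, ?_⟩
        intro hz
        rw [hz, abs_zero] at h2
        have hτn : 0 < ‖τ j‖ * ‖s j‖ := lt_of_lt_of_le (abs_pos.mpr h0) cs1
        nlinarith [norm_nonneg (τ j), norm_nonneg (s j)]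
      · refine ⟨?_, h0⟩
        intro hz
        rw [hz, abs_zero] at h1
        have hρn : 0 < ‖σ j‖ * ‖ρ j‖ := lt_of_lt_of_le (abs_pos.mpr h0) cs2
        nlinarith [norm_nonneg (σ j), norm_nonneg (ρ j)]
    obtain ⟨hts1, hts2⟩ := hts
    refine ⟨?_, ?_, ?_, hts1, hts2⟩
    · intro hz; exact hts1 (by rw [hz, inner_zero_right])
    · intro hz; exact hts1 (by rw [hz, inner_zero_left])
    · intro hz; exact hts2 (by rw [hz, inner_zero_right])
  have hsn : ∀ j, 0 < ‖s j‖ := fun j => norm_pos_iff.mpr (hfacts j).1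
  have hc₃ : 0 ≤ c₃ := by
    have h2 := (norm_nonneg (J (w 1) - J (w 0))).trans (hLip (w 1) (w 0))
    have h3 : ‖w 1 - w 0‖ = ‖s 0‖ := by rw [hs 0]
    rw [h3] at h2
    exact (mul_nonneg_iff_of_pos_right (hsn 0)).mp h2
  have hα : ∀ j, ∃ α : ℝ, A (j+1) = A j + α • outer (ρ j) (τ j)
      ∧ |α| * (c₁^2 * (‖σ j‖ * ‖ρ j‖)) ≤ 1 ∧ |α| * (c₁^2 * (‖s j‖ * ‖τ j‖)) ≤ 1
      ∧ (α * ⟪τ j, s j⟫ = 1 ∨ α * ⟪σ j, ρ j⟫ = 1) := by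
    intro j
    obtain ⟨hs0, hτ0, hρ0, hts1, hts2⟩ := hfacts j
    have h1 := hskip1 j; have h2 := hskip2 j
    have cs1 := abs_real_inner_le_norm (τ j) (s j)
    have cs2 := abs_real_inner_le_norm (σ j) (ρ j)
    have hc1le : c₁ ≤ 1 := hc₁1.le
    rcases hupd j with ⟨h0, hAe⟩ | ⟨h0, hAe⟩
    · refine ⟨1 / ⟪τ j, s j⟫, hAe, ?_, ?_, Or.inl (one_div_mul_cancel h0)⟩
      · rw [abs_div, abs_one, div_mul_eq_mul_div, one_mul,
          div_le_one (abs_pos.mpr h0)]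
        nlinarith [norm_nonneg (σ j), norm_nonneg (ρ j)]
      · rw [abs_div, abs_one, div_mul_eq_mul_div, one_mul,
          div_le_one (abs_pos.mpr h0)]
        nlinarith [mul_le_mul_of_nonneg_left h2 hc₁0.le,
          mul_le_mul_of_nonneg_left cs2 hc₁0.le]
    · refine ⟨1 / ⟪σ j, ρ j⟫, hAe, ?_, ?_, Or.inr (one_div_mul_cancel h0)⟩
      · rw [abs_div, abs_one, div_mul_eq_mul_div, one_mul,
          div_le_one (abs_pos.mpr h0)]
        nlinarith [mul_le_mul_of_nonneg_left h1 hc₁0.le,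
          mul_le_mul_of_nonneg_left cs1 hc₁0.le]
      · rw [abs_div, abs_one, div_mul_eq_mul_div, one_mul,
          div_le_one (abs_pos.mpr h0)]
        nlinarith [norm_nonneg (s j), norm_nonneg (τ j)]
  intro k l hkl
  have hsec : ∀ l', k ≤ l' →
      ‖matVec (J (w (l'+1))) (s k) - y k‖ ≤ c₃ * η (l'+1) k * ‖s k‖ := by
    intro l' hkl'
    have hm := mvt_aux c₃ hc₃ F J hJ hLip (w k) (w (k+1)) (w (l'+1))
    rw [← hs k, ← hy k] at hm
    calc ‖matVec (J (w (l'+1))) (s k) - y k‖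
        = ‖y k - matVec (J (w (l'+1))) (s k)‖ := norm_sub_rev _ _
      _ ≤ c₃ * max ‖w (l'+1) - w k‖ ‖w (l'+1) - w (k+1)‖ * ‖s k‖ := hm
      _ ≤ c₃ * η (l'+1) k * ‖s k‖ := by
          refine mul_le_mul_of_nonneg_right (mul_le_mul_of_nonneg_left ?_ hc₃) (norm_nonneg _)
          exact max_le (hmem (le_refl k) (by omega) (by omega))
            (hmem (by omega) (by omega) (by omega))
  have hsec2 : ∀ l', k + 1 ≤ l' →
      ‖y l' - matVec (J (w (k+1))) (s l')‖ ≤ c₃ * η (l'+1) k * ‖s l'‖ := by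
    intro l' hl'
    have hm := mvt_aux c₃ hc₃ F J hJ hLip (w l') (w (l'+1)) (w (k+1))
    rw [← hs l', ← hy l'] at hm
    refine le_trans hm ?_
    refine mul_le_mul_of_nonneg_right (mul_le_mul_of_nonneg_left (max_le ?_ ?_) hc₃)
      (norm_nonneg _)
    · rw [norm_sub_rev]; exact hmem (by omega) (by omega) (by omega)
    · rw [norm_sub_rev]; exact hmem (by omega) (by omega) (by omega)
  have hδ : |⟪σ k, ρ k⟫ - ⟪τ k, s k⟫| ≤ ‖σ k‖ * (c₃ * η (k+1) k * ‖s k‖) := by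
    have he : ⟪σ k, ρ k⟫ - ⟪τ k, s k⟫ = ⟪σ k, y k - matVec (J (w (k+1))) (s k)⟫ := by
      rw [hρ k, hτ k, hγ k]
      simp only [inner_sub_left, inner_sub_right, inner_matVec_transpose]
      ring
    rw [he]
    refine le_trans (abs_real_inner_le_norm _ _) ?_
    refine mul_le_mul_of_nonneg_left ?_ (norm_nonneg _)
    rw [norm_sub_rev]
    exact hsec k (le_refl k)
  have hc2 : (0:ℝ) < c₁ ^ 2 := by positivity
  induction l, hkl using Nat.le_induction with
  | base =>
    obtain ⟨α, hAe, hbρ, hbτ, hcase⟩ := hα k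
    have hη0 : 0 ≤ η (k+1) k := hnn (by omega)
    simp only [Nat.add_sub_cancel_left, pow_one]
    have hRHSnn : ∀ r : ℝ, 0 ≤ r → (0:ℝ) ≤ c₃ / c₁ * (2 / c₁ ^ 2 + 1) * η (k+1) k * r :=
      fun r hr => mul_nonneg (mul_nonneg (mul_nonneg (div_nonneg hc₃ hc₁0.le)
        (by positivity)) hη0) hr
    constructor
    · have hAs : matVec (A (k+1)) (s k) = matVec (A k) (s k) + (α * ⟪τ k, s k⟫) • ρ k := by
        rw [hAe, matVec_add, matVec_smul, matVec_outer, smul_smul]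
      have he1 : y k - matVec (A (k+1)) (s k) = (1 - α * ⟪τ k, s k⟫) • ρ k := by
        rw [hAs, sub_smul, one_smul, hρ k]; abel
      rw [he1, norm_smul, Real.norm_eq_abs]
      rcases hcase with hfa | had
      · rw [hfa, sub_self, abs_zero, zero_mul]
        exact hRHSnn _ (norm_nonneg _)
      · have h1 : 1 - α * ⟪τ k, s k⟫ = α * (⟪σ k, ρ k⟫ - ⟪τ k, s k⟫) := by
          rw [mul_sub, had]
        rw [h1, abs_mul]
        apply arith_base c₁ c₃ _ _ _ hc₁0 hc₁1.le hc₃ (norm_nonneg _) hη0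
        calc |α| * |⟪σ k, ρ k⟫ - ⟪τ k, s k⟫| * ‖ρ k‖ * c₁ ^ 2
            ≤ |α| * (‖σ k‖ * (c₃ * η (k+1) k * ‖s k‖)) * ‖ρ k‖ * c₁ ^ 2 := by
              refine mul_le_mul_of_nonneg_right (mul_le_mul_of_nonneg_right
                (mul_le_mul_of_nonneg_left hδ (abs_nonneg _)) (norm_nonneg _)) hc2.le
          _ = (|α| * (c₁^2 * (‖σ k‖ * ‖ρ k‖))) * (c₃ * η (k+1) k * ‖s k‖) := by ring
          _ ≤ 1 * (c₃ * η (k+1) k * ‖s k‖) := by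
              refine mul_le_mul_of_nonneg_right hbρ ?_
              exact mul_nonneg (mul_nonneg hc₃ hη0) (norm_nonneg _)
          _ = c₃ * η (k+1) k * ‖s k‖ := one_mul _
    · have hAt : matVec (A (k+1))ᵀ (σ k) = matVec (A k)ᵀ (σ k) + (α * ⟪σ k, ρ k⟫) • τ k := by
        rw [hAe, Matrix.transpose_add, Matrix.transpose_smul, outer_transpose, matVec_add,
          matVec_smul, matVec_outer, smul_smul, real_inner_comm (ρ k) (σ k)]
      have hf1 : γ k - matVec (A (k+1))ᵀ (σ k) = (1 - α * ⟪σ k, ρ k⟫) • τ k := by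
        rw [hAt, sub_smul, one_smul, hτ k]; abel
      rw [hf1, norm_smul, Real.norm_eq_abs]
      rcases hcase with hfa | had
      · have h1 : 1 - α * ⟪σ k, ρ k⟫ = α * (⟪τ k, s k⟫ - ⟪σ k, ρ k⟫) := by
          rw [mul_sub, hfa]
        rw [h1, abs_mul]
        apply arith_base c₁ c₃ _ _ _ hc₁0 hc₁1.le hc₃ (norm_nonneg _) hη0
        calc |α| * |⟪τ k, s k⟫ - ⟪σ k, ρ k⟫| * ‖τ k‖ * c₁ ^ 2
            ≤ |α| * (‖σ k‖ * (c₃ * η (k+1) k * ‖s k‖)) * ‖τ k‖ * c₁ ^ 2 := by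
              rw [abs_sub_comm]
              refine mul_le_mul_of_nonneg_right (mul_le_mul_of_nonneg_right
                (mul_le_mul_of_nonneg_left hδ (abs_nonneg _)) (norm_nonneg _)) hc2.le
          _ = (|α| * (c₁^2 * (‖s k‖ * ‖τ k‖))) * (c₃ * η (k+1) k * ‖σ k‖) := by ring
          _ ≤ 1 * (c₃ * η (k+1) k * ‖σ k‖) := by
              refine mul_le_mul_of_nonneg_right hbτ ?_
              exact mul_nonneg (mul_nonneg hc₃ hη0) (norm_nonneg _)
          _ = c₃ * η (k+1) k * ‖σ k‖ := one_mul _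
      · rw [had, sub_self, abs_zero, zero_mul]
        exact hRHSnn _ (norm_nonneg _)
  | succ l hl IH =>
    obtain ⟨eIH, fIH⟩ := IH
    obtain ⟨α, hAe, hbρ, hbτ, -⟩ := hα l
    have hkl2 : k ≤ l := by omega
    have hη'nn : 0 ≤ η (l+1) k := hnn (by omega)
    have hηnn : 0 ≤ η l k := hnn hkl2
    have hηm : η l k ≤ η (l+1) k := hmono hkl2
    have hMd : 1 ≤ (2 / c₁^2 + 1) ^ (l - k) := one_le_pow₀ (le_add_of_nonneg_left (by positivity))
    constructor
    · have hIτl : |⟪τ l, s k⟫|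
          ≤ ‖σ l‖ * (c₃ * η (l+1) k * ‖s k‖ + ‖y k - matVec (A l) (s k)‖) := by
        have hexp : ⟪τ l, s k⟫ = ⟪σ l, matVec (J (w (l+1))) (s k) - y k⟫
            + ⟪σ l, y k - matVec (A l) (s k)⟫ := by
          rw [hτ l, hγ l]
          simp only [inner_sub_left, inner_sub_right, inner_matVec_transpose]
          ring
        rw [hexp]
        refine le_trans (abs_add_le _ _) ?_
        calc |⟪σ l, matVec (J (w (l+1))) (s k) - y k⟫| + |⟪σ l, y k - matVec (A l) (s k)⟫|
            ≤ ‖σ l‖ * ‖matVec (J (w (l+1))) (s k) - y k‖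
              + ‖σ l‖ * ‖y k - matVec (A l) (s k)‖ :=
              add_le_add (abs_real_inner_le_norm _ _) (abs_real_inner_le_norm _ _)
          _ ≤ ‖σ l‖ * (c₃ * η (l+1) k * ‖s k‖) + ‖σ l‖ * ‖y k - matVec (A l) (s k)‖ :=
              add_le_add_left (mul_le_mul_of_nonneg_left (hsec l hkl2) (norm_nonneg _)) _
          _ = ‖σ l‖ * (c₃ * η (l+1) k * ‖s k‖ + ‖y k - matVec (A l) (s k)‖) := by ring
      have hαρ : |α| * (‖σ l‖ * ‖ρ l‖) ≤ 1 / c₁ ^ 2 := by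
        rw [le_div_iff₀ hc2]
        calc |α| * (‖σ l‖ * ‖ρ l‖) * c₁ ^ 2 = |α| * (c₁^2 * (‖σ l‖ * ‖ρ l‖)) := by ring
          _ ≤ 1 := hbρ
      have hestep : ‖y k - matVec (A (l+1)) (s k)‖ ≤ ‖y k - matVec (A l) (s k)‖
          + 1 / c₁ ^ 2 * (c₃ * η (l+1) k * ‖s k‖ + ‖y k - matVec (A l) (s k)‖) := by
        have hAs : matVec (A (l+1)) (s k) = matVec (A l) (s k) + (α * ⟪τ l, s k⟫) • ρ l := by
          rw [hAe, matVec_add, matVec_smul, matVec_outer, smul_smul]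
        have he1 : y k - matVec (A (l+1)) (s k)
            = (y k - matVec (A l) (s k)) - (α * ⟪τ l, s k⟫) • ρ l := by rw [hAs]; abel
        rw [he1]
        refine le_trans (norm_sub_le _ _) ?_
        rw [norm_smul, Real.norm_eq_abs, abs_mul]
        refine add_le_add_right ?_ _
        calc |α| * |⟪τ l, s k⟫| * ‖ρ l‖
            ≤ |α| * (‖σ l‖ * (c₃ * η (l+1) k * ‖s k‖ + ‖y k - matVec (A l) (s k)‖)) * ‖ρ l‖ :=
              mul_le_mul_of_nonneg_right
                (mul_le_mul_of_nonneg_left hIτl (abs_nonneg _)) (norm_nonneg _)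
          _ = (|α| * (‖σ l‖ * ‖ρ l‖))
              * (c₃ * η (l+1) k * ‖s k‖ + ‖y k - matVec (A l) (s k)‖) := by ring
          _ ≤ 1 / c₁^2 * (c₃ * η (l+1) k * ‖s k‖ + ‖y k - matVec (A l) (s k)‖) := by
              refine mul_le_mul_of_nonneg_right hαρ ?_
              exact add_nonneg (mul_nonneg (mul_nonneg hc₃ hη'nn) (norm_nonneg _))
                (norm_nonneg _)
      calc ‖y k - matVec (A (l+1)) (s k)‖
          ≤ c₃ / c₁ * ((2/c₁^2+1) * (2/c₁^2+1)^(l-k)) * η (l+1) k * ‖s k‖ :=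
            arith_step c₁ c₃ _ _ (η l k) (η (l+1) k) ‖s k‖ ((2/c₁^2+1)^(l-k)) hc₁0 hc₁1.le hc₃
              (norm_nonneg _) hηnn hηm hMd eIH hestep
        _ = c₃ / c₁ * (2/c₁^2+1) ^ (l+1-k) * η (l+1) k * ‖s k‖ := by
            rw [show l+1-k = (l-k)+1 by omega, pow_succ]; ring
    · have hIρl : |⟪σ k, ρ l⟫|
          ≤ ‖s l‖ * (c₃ * η (l+1) k * ‖σ k‖ + ‖γ k - matVec (A l)ᵀ (σ k)‖) := by
        have hexp : ⟪σ k, ρ l⟫ = ⟪σ k, y l - matVec (J (w (k+1))) (s l)⟫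
            + ⟪γ k - matVec (A l)ᵀ (σ k), s l⟫ := by
          rw [hρ l, hγ k]
          simp only [inner_sub_left, inner_sub_right, inner_matVec_transpose]
          ring
        rw [hexp]
        refine le_trans (abs_add_le _ _) ?_
        calc |⟪σ k, y l - matVec (J (w (k+1))) (s l)⟫| + |⟪γ k - matVec (A l)ᵀ (σ k), s l⟫|
            ≤ ‖σ k‖ * ‖y l - matVec (J (w (k+1))) (s l)‖
              + ‖γ k - matVec (A l)ᵀ (σ k)‖ * ‖s l‖ :=
              add_le_add (abs_real_inner_le_norm _ _) (abs_real_inner_le_norm _ _)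
          _ ≤ ‖σ k‖ * (c₃ * η (l+1) k * ‖s l‖) + ‖γ k - matVec (A l)ᵀ (σ k)‖ * ‖s l‖ :=
              add_le_add_left (mul_le_mul_of_nonneg_left (hsec2 l hl) (norm_nonneg _)) _
          _ = ‖s l‖ * (c₃ * η (l+1) k * ‖σ k‖ + ‖γ k - matVec (A l)ᵀ (σ k)‖) := by ring
      have hατ : |α| * (‖s l‖ * ‖τ l‖) ≤ 1 / c₁ ^ 2 := by
        rw [le_div_iff₀ hc2]
        calc |α| * (‖s l‖ * ‖τ l‖) * c₁ ^ 2 = |α| * (c₁^2 * (‖s l‖ * ‖τ l‖)) := by ring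
          _ ≤ 1 := hbτ
      have hfstep : ‖γ k - matVec (A (l+1))ᵀ (σ k)‖ ≤ ‖γ k - matVec (A l)ᵀ (σ k)‖
          + 1 / c₁ ^ 2 * (c₃ * η (l+1) k * ‖σ k‖ + ‖γ k - matVec (A l)ᵀ (σ k)‖) := by
        have hAt : matVec (A (l+1))ᵀ (σ k) = matVec (A l)ᵀ (σ k) + (α * ⟪σ k, ρ l⟫) • τ l := by
          rw [hAe, Matrix.transpose_add, Matrix.transpose_smul, outer_transpose, matVec_add,
            matVec_smul, matVec_outer, smul_smul, real_inner_comm (ρ l) (σ k)]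
        have hf1 : γ k - matVec (A (l+1))ᵀ (σ k)
            = (γ k - matVec (A l)ᵀ (σ k)) - (α * ⟪σ k, ρ l⟫) • τ l := by rw [hAt]; abel
        rw [hf1]
        refine le_trans (norm_sub_le _ _) ?_
        rw [norm_smul, Real.norm_eq_abs, abs_mul]
        refine add_le_add_right ?_ _
        calc |α| * |⟪σ k, ρ l⟫| * ‖τ l‖
            ≤ |α| * (‖s l‖ * (c₃ * η (l+1) k * ‖σ k‖ + ‖γ k - matVec (A l)ᵀ (σ k)‖)) * ‖τ l‖ :=
              mul_le_mul_of_nonneg_right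
                (mul_le_mul_of_nonneg_left hIρl (abs_nonneg _)) (norm_nonneg _)
          _ = (|α| * (‖s l‖ * ‖τ l‖))
              * (c₃ * η (l+1) k * ‖σ k‖ + ‖γ k - matVec (A l)ᵀ (σ k)‖) := by ring
          _ ≤ 1 / c₁^2 * (c₃ * η (l+1) k * ‖σ k‖ + ‖γ k - matVec (A l)ᵀ (σ k)‖) := by
              refine mul_le_mul_of_nonneg_right hατ ?_
              exact add_nonneg (mul_nonneg (mul_nonneg hc₃ hη'nn) (norm_nonneg _))
                (norm_nonneg _)
      calc ‖γ k - matVec (A (l+1))ᵀ (σ k)‖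
          ≤ c₃ / c₁ * ((2/c₁^2+1) * (2/c₁^2+1)^(l-k)) * η (l+1) k * ‖σ k‖ :=
            arith_step c₁ c₃ _ _ (η l k) (η (l+1) k) ‖σ k‖ ((2/c₁^2+1)^(l-k)) hc₁0 hc₁1.le hc₃
              (norm_nonneg _) hηnn hηm hMd fIH hfstep
        _ = c₃ / c₁ * (2/c₁^2+1) ^ (l+1-k) * η (l+1) k * ‖σ k‖ := by
            rw [show l+1-k = (l-k)+1 by omega, pow_succ]; ring
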